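/- For all integers d ≥ 2 and n ≥ 2, the number of subgroups of ℤ^d of index n satisfies a_n(ℤ^d) ≤ 3^d n^{d-1} (log n)^{d-1}. -/

import Mathlib

open AddSubgroup Finset

/-- `a d n` is the number of subgroups of `ℤ^d` of index exactly `n`. -/
noncomputable def subgroupCount (d n : ℕ) : ℕ :=
  Nat.card {H : AddSubgroup (Fin d → ℤ) // H.index = n}

namespace SubgroupCountAux

/-! ### Transfer along additive equivalences -/

lemma index_comap_addEquiv {G G' : Type*} [AddGroup G] [AddGroup G'] (σ : G ≃+ G')
    (H : AddSubgroup G') : (H.comap σ.toAddMonoidHom).index = H.index := by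
  rw [AddSubgroup.index_comap, AddMonoidHom.range_eq_top_of_surjective _ σ.surjective,
    AddSubgroup.relIndex_top_right]

/-- Bijection between subgroups of fixed index under an additive equivalence. -/
def subtypeEquiv {G G' : Type*} [AddGroup G] [AddGroup G'] (σ : G ≃+ G') (n : ℕ) :
    {H : AddSubgroup G' // H.index = n} ≃ {H : AddSubgroup G // H.index = n} where
  toFun H := ⟨H.1.comap σ.toAddMonoidHom, by rw [index_comap_addEquiv, H.2]⟩
  invFun H := ⟨H.1.comap σ.symm.toAddMonoidHom, by rw [index_comap_addEquiv, H.2]⟩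
  left_inv H := Subtype.ext (by ext x; simp)
  right_inv H := Subtype.ext (by ext x; simp)

/-! ### Subgroups of ℤ -/

lemma int_eq_zmultiples {H : AddSubgroup ℤ} {n : ℕ} (hn : n ≠ 0) (h : H.index = n) :
    H = zmultiples (n : ℤ) := by
  obtain ⟨a, ha⟩ := Int.subgroup_cyclic H
  rw [← zmultiples_eq_closure] at ha
  subst ha
  rw [Int.index_zmultiples] at h
  have : zmultiples ((a.natAbs : ℤ)) = zmultiples a := by
    rcases Int.natAbs_eq a with h' | h'
    · rw [← h']
    · rw [← neg_neg a]
      nth_rewrite 2 [h']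
      ext x
      simp only [mem_zmultiples_iff]
      constructor
      · rintro ⟨k, rfl⟩; exact ⟨-k, by simp⟩
      · rintro ⟨k, rfl⟩; exact ⟨-k, by simp⟩
  rw [← this, h]

lemma subsingleton_int {n : ℕ} (hn : n ≠ 0) :
    Subsingleton {H : AddSubgroup ℤ // H.index = n} :=
  ⟨fun H₁ H₂ => Subtype.ext
    ((int_eq_zmultiples hn H₁.2).trans (int_eq_zmultiples hn H₂.2).symm)⟩

/-! ### The projection / intersection data for subgroups of `ℤ × A` -/

variable {A : Type*} [AddCommGroup A]

/-- The index of the projection of `H` to the first (ℤ) factor. -/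
noncomputable def cOf (H : AddSubgroup (ℤ × A)) : ℕ :=
  (H.map (AddMonoidHom.fst ℤ A)).index

/-- The subgroup of `A` obtained by intersecting `H` with `0 × A`. -/
def kOf (H : AddSubgroup (ℤ × A)) : AddSubgroup A :=
  H.comap (AddMonoidHom.inr ℤ A)

lemma range_inr_eq : (AddMonoidHom.inr ℤ A).range = (AddMonoidHom.fst ℤ A).ker := by
  ext x
  simp only [AddMonoidHom.mem_range, AddMonoidHom.mem_ker, AddMonoidHom.coe_fst,
    AddMonoidHom.inr_apply, Prod.ext_iff]
  constructor
  · rintro ⟨a, ha, -⟩; exact ha.symm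
  · intro h; exact ⟨x.2, h.symm, rfl⟩

lemma key_mul (H : AddSubgroup (ℤ × A)) : (kOf H).index * cOf H = H.index := by
  have h1 : cOf H = (H ⊔ (AddMonoidHom.fst ℤ A).ker).index := by
    rw [cOf, AddSubgroup.index_map,
      AddMonoidHom.range_eq_top_of_surjective _ Prod.fst_surjective,
      AddSubgroup.index_top, mul_one]
  have h2 : (kOf H).index = H.relIndex (AddMonoidHom.fst ℤ A).ker := by
    rw [kOf, AddSubgroup.index_comap, range_inr_eq]
  rw [h1, h2, ← AddSubgroup.relIndex_sup_left,
    AddSubgroup.relIndex_mul_index le_sup_left]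

lemma cOf_ne_zero {H : AddSubgroup (ℤ × A)} (hH : H.index ≠ 0) : cOf H ≠ 0 := by
  intro h0
  exact hH (by rw [← key_mul H, h0, mul_zero])

lemma map_fst_eq {H : AddSubgroup (ℤ × A)} (hH : H.index ≠ 0) :
    H.map (AddMonoidHom.fst ℤ A) = zmultiples ((cOf H : ℤ)) :=
  int_eq_zmultiples (cOf_ne_zero hH) rfl

lemma exists_mem {H : AddSubgroup (ℤ × A)} (hH : H.index ≠ 0) :
    ∃ a : A, ((cOf H : ℤ), a) ∈ H := by
  have h : ((cOf H : ℤ)) ∈ H.map (AddMonoidHom.fst ℤ A) := by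
    rw [map_fst_eq hH]; exact mem_zmultiples _
  obtain ⟨x, hx, hx1⟩ := h
  exact ⟨x.2, by rwa [show ((cOf H : ℤ), x.2) = x from Prod.ext hx1.symm rfl]⟩

lemma eq_sup {H : AddSubgroup (ℤ × A)} (hH : H.index ≠ 0) {w : ℤ × A}
    (hw : w ∈ H) (hw1 : w.1 = (cOf H : ℤ)) :
    H = (kOf H).map (AddMonoidHom.inr ℤ A) ⊔ zmultiples w := by
  apply le_antisymm
  · intro x hx
    have h1 : x.1 ∈ zmultiples ((cOf H : ℤ)) := by
      rw [← map_fst_eq hH]; exact ⟨x, hx, rfl⟩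
    obtain ⟨k, hk⟩ := mem_zmultiples_iff.mp h1
    have hmem : x - k • w ∈ H := sub_mem hx (zsmul_mem hw k)
    have hfst : (x - k • w).1 = 0 := by
      have : (k • w).1 = k • w.1 := rfl
      simp [this, hw1, ← hk, smul_eq_mul]
    have hxk : x - k • w ∈ (kOf H).map (AddMonoidHom.inr ℤ A) := by
      refine AddSubgroup.mem_map.mpr ⟨(x - k • w).2, ?_, ?_⟩
      · show ((0 : ℤ), (x - k • w).2) ∈ H
        rwa [show ((0 : ℤ), (x - k • w).2) = x - k • w from Prod.ext hfst.symm rfl]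
      · exact Prod.ext hfst.symm rfl
    have : x = (x - k • w) + k • w := by abel
    rw [this]
    exact add_mem (AddSubgroup.mem_sup_left hxk) (AddSubgroup.mem_sup_right (zsmul_mem (mem_zmultiples w) k))
  · refine sup_le ?_ ?_
    · rintro x ⟨y, hy, rfl⟩; exact hy
    · rw [zmultiples_le]; exact hw

lemma cOf_eq_div {H : AddSubgroup (ℤ × A)} {n : ℕ} (hn : n ≠ 0) (hH : H.index = n) :
    cOf H = n / (kOf H).index := by
  have := key_mul H
  rw [hH] at this
  have hk : (kOf H).index ≠ 0 := by
    intro h0; rw [h0, zero_mul] at this; exact hn this.symm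
  rw [← this, Nat.mul_div_cancel_left _ (Nat.pos_of_ne_zero hk)]

/-- If two subgroups of index `n` have the same `kOf` and elements over `cOf`
congruent mod `kOf`, they are equal. -/
lemma eq_of_data {H₁ H₂ : AddSubgroup (ℤ × A)} {n : ℕ} (hn : n ≠ 0)
    (h₁ : H₁.index = n) (h₂ : H₂.index = n) (hK : kOf H₁ = kOf H₂)
    {v₁ v₂ : A} (hv₁ : ((cOf H₁ : ℤ), v₁) ∈ H₁) (hv₂ : ((cOf H₂ : ℤ), v₂) ∈ H₂)
    (hcong : v₂ - v₁ ∈ kOf H₁) : H₁ = H₂ := by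
  have hn₁ : H₁.index ≠ 0 := by rw [h₁]; exact hn
  have hn₂ : H₂.index ≠ 0 := by rw [h₂]; exact hn
  have hc : cOf H₁ = cOf H₂ := by
    rw [cOf_eq_div hn h₁, cOf_eq_div hn h₂, hK]
  have e₁ : H₁ = (kOf H₁).map (AddMonoidHom.inr ℤ A) ⊔ zmultiples ((cOf H₁ : ℤ), v₁) :=
    eq_sup hn₁ hv₁ rfl
  have e₂ : H₂ = (kOf H₁).map (AddMonoidHom.inr ℤ A) ⊔ zmultiples ((cOf H₁ : ℤ), v₂) := by
    rw [hc, hK]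
    exact eq_sup hn₂ hv₂ rfl
  rw [e₁, e₂]
  have hmem : ((0 : ℤ), v₂ - v₁) ∈ (kOf H₁).map (AddMonoidHom.inr ℤ A) :=
    AddSubgroup.mem_map.mpr ⟨v₂ - v₁, hcong, rfl⟩
  apply le_antisymm
  · refine sup_le le_sup_left ?_
    rw [zmultiples_le]
    have : ((cOf H₁ : ℤ), v₁) = ((cOf H₁ : ℤ), v₂) - ((0 : ℤ), v₂ - v₁) := by
      ext <;> simp
    rw [this]
    exact sub_mem (AddSubgroup.mem_sup_right (mem_zmultiples _)) (AddSubgroup.mem_sup_left hmem)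
  · refine sup_le le_sup_left ?_
    rw [zmultiples_le]
    have : ((cOf H₁ : ℤ), v₂) = ((cOf H₁ : ℤ), v₁) + ((0 : ℤ), v₂ - v₁) := by
      ext <;> simp
    rw [this]
    exact add_mem (AddSubgroup.mem_sup_right (mem_zmultiples _)) (AddSubgroup.mem_sup_left hmem)

/-! ### Counting: the recursive step -/

lemma natCard_sigma {ι : Type*} [Fintype ι] (f : ι → Type*) [∀ i, Finite (f i)] :
    Nat.card (Σ i, f i) = ∑ i, Nat.card (f i) := by
  have : ∀ i, Fintype (f i) := fun i => Fintype.ofFinite (f i)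
  simp only [Nat.card_eq_fintype_card, Fintype.card_sigma]

lemma step (n : ℕ) (hn : n ≠ 0)
    (hFin : ∀ m : ℕ, m ≠ 0 → Finite {K : AddSubgroup A // K.index = m}) :
    Finite {H : AddSubgroup (ℤ × A) // H.index = n} ∧
    Nat.card {H : AddSubgroup (ℤ × A) // H.index = n} ≤
      ∑ m ∈ n.divisors, m * Nat.card {K : AddSubgroup A // K.index = m} := by
  classical
  set S := {H : AddSubgroup (ℤ × A) // H.index = n} with hS
  -- fiber S over the divisor m = (kOf H).index
  have hmem : ∀ H : S, (kOf H.1).index ∈ n.divisors := by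
    intro H
    exact Nat.mem_divisors.mpr ⟨⟨cOf H.1, by rw [key_mul, H.2]⟩, hn⟩
  set T := Σ m : {m : ℕ // m ∈ n.divisors}, Σ K : {K : AddSubgroup A // K.index = m.1},
      {H : S // kOf H.1 = K.1} with hT
  -- the tautological equivalence S ≃ T
  have equivST : S ≃ T := by
    refine ⟨fun H => ⟨⟨(kOf H.1).index, hmem H⟩, ⟨kOf H.1, rfl⟩, ⟨H, rfl⟩⟩,
      fun t => t.2.2.1, fun H => rfl, ?_⟩
    rintro ⟨⟨m, hm⟩, ⟨K, hK⟩, ⟨H, hH⟩⟩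
    cases hH; cases hK; rfl
  -- each fiber injects into `A ⧸ K`
  have hne : ∀ H : S, H.1.index ≠ 0 := fun H => by rw [H.2]; exact hn
  have finFiber : ∀ (m : {m : ℕ // m ∈ n.divisors}) (K : {K : AddSubgroup A // K.index = m.1}),
      Finite {H : S // kOf H.1 = K.1} ∧ Nat.card {H : S // kOf H.1 = K.1} ≤ m.1 := by
    intro m K
    have hKfi : K.1.FiniteIndex := ⟨by rw [K.2]; exact (Nat.pos_of_mem_divisors m.2).ne'⟩
    have hQfin : Finite (A ⧸ K.1) := K.1.finite_quotient_of_finiteIndex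
    set ψ : {H : S // kOf H.1 = K.1} → A ⧸ K.1 :=
      fun H => QuotientAddGroup.mk (exists_mem (hne H.1)).choose with hψ
    have hinj : Function.Injective ψ := by
      intro H₁ H₂ hψeq
      have h12 : -(exists_mem (hne H₁.1)).choose + (exists_mem (hne H₂.1)).choose ∈ K.1 :=
        (QuotientAddGroup.eq).mp hψeq
      have hcong : (exists_mem (hne H₂.1)).choose - (exists_mem (hne H₁.1)).choose
          ∈ kOf H₁.1.1 := by
        rw [H₁.2, sub_eq_neg_add]; exact h12
      have := eq_of_data hn H₁.1.2 H₂.1.2 (H₁.2.trans H₂.2.symm)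
        (exists_mem (hne H₁.1)).choose_spec (exists_mem (hne H₂.1)).choose_spec hcong
      exact Subtype.ext (Subtype.ext this)
    have hcard : Nat.card (A ⧸ K.1) = m.1 := by
      rw [← AddSubgroup.index_eq_card, K.2]
    exact ⟨Finite.of_injective ψ hinj,
      le_trans (Nat.card_le_card_of_injective ψ hinj) (le_of_eq hcard)⟩
  haveI instFiber : ∀ (m : {m : ℕ // m ∈ n.divisors}) (K : {K : AddSubgroup A // K.index = m.1}),
      Finite {H : S // kOf H.1 = K.1} := fun m K => (finFiber m K).1
  haveI instK : ∀ m : {m : ℕ // m ∈ n.divisors}, Finite {K : AddSubgroup A // K.index = m.1} :=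
    fun m => hFin m.1 (Nat.pos_of_mem_divisors m.2).ne'
  haveI finT : Finite T := by infer_instance
  have finS : Finite S := Finite.of_equiv T equivST.symm
  refine ⟨finS, ?_⟩
  haveI : ∀ m : {m : ℕ // m ∈ n.divisors}, Fintype {K : AddSubgroup A // K.index = m.1} :=
    fun m => Fintype.ofFinite _
  have hcT : Nat.card S = Nat.card T := Nat.card_congr equivST
  rw [hcT, hT, natCard_sigma]
  have hbound : ∀ m : {m : ℕ // m ∈ n.divisors},
      Nat.card (Σ K : {K : AddSubgroup A // K.index = m.1}, {H : S // kOf H.1 = K.1}) ≤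
        m.1 * Nat.card {K : AddSubgroup A // K.index = m.1} := by
    intro m
    rw [natCard_sigma]
    calc ∑ K : {K : AddSubgroup A // K.index = m.1}, Nat.card {H : S // kOf H.1 = K.1}
        ≤ ∑ _K : {K : AddSubgroup A // K.index = m.1}, m.1 :=
          Finset.sum_le_sum (fun K _ => (finFiber m K).2)
      _ = Fintype.card {K : AddSubgroup A // K.index = m.1} * m.1 := by
          rw [Finset.sum_const, Finset.card_univ, smul_eq_mul]
      _ = m.1 * Nat.card {K : AddSubgroup A // K.index = m.1} := by
          rw [Nat.card_eq_fintype_card, mul_comm]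
  calc ∑ m : {m : ℕ // m ∈ n.divisors},
        Nat.card (Σ K : {K : AddSubgroup A // K.index = m.1}, {H : S // kOf H.1 = K.1})
      ≤ ∑ m : {m : ℕ // m ∈ n.divisors}, m.1 * Nat.card {K : AddSubgroup A // K.index = m.1} :=
        Finset.sum_le_sum (fun m _ => hbound m)
    _ = ∑ m ∈ n.divisors, m * Nat.card {K : AddSubgroup A // K.index = m} :=
        Finset.sum_coe_sort n.divisors (fun m => m * Nat.card {K : AddSubgroup A // K.index = m})

/-! ### Analytic estimates -/

lemma sum_divisors_le_harmonic (n : ℕ) :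
    ∑ d ∈ n.divisors, (d : ℝ)⁻¹ ≤ 1 + Real.log n := by
  have h1 : ∑ d ∈ n.divisors, (d : ℝ)⁻¹ ≤ ∑ d ∈ Finset.Icc 1 n, (d : ℝ)⁻¹ := by
    apply Finset.sum_le_sum_of_subset_of_nonneg
    · intro d hd
      exact Finset.mem_Icc.mpr ⟨Nat.pos_of_mem_divisors hd, Nat.divisor_le hd⟩
    · intro i _ _
      positivity
  have h2 : (harmonic n : ℝ) = ∑ d ∈ Finset.Icc 1 n, (d : ℝ)⁻¹ := by
    rw [harmonic_eq_sum_Icc]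
    push_cast
    rfl
  calc ∑ d ∈ n.divisors, (d : ℝ)⁻¹ ≤ ∑ d ∈ Finset.Icc 1 n, (d : ℝ)⁻¹ := h1
    _ = (harmonic n : ℝ) := h2.symm
    _ ≤ 1 + Real.log n := harmonic_le_one_add_log n

lemma sum_divisors_pow_le (n k : ℕ) :
    ∑ m ∈ n.divisors, (m : ℝ) ^ (k + 1) ≤ (n : ℝ) ^ (k + 1) * (1 + Real.log n) := by
  have key : ∑ m ∈ n.divisors, (m : ℝ) ^ (k + 1)
      = ∑ d ∈ n.divisors, ((n / d : ℕ) : ℝ) ^ (k + 1) :=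
    (Nat.sum_div_divisors n (fun m => (m : ℝ) ^ (k + 1))).symm
  rw [key]
  have hstep : ∀ d ∈ n.divisors, ((n / d : ℕ) : ℝ) ^ (k + 1) ≤ (n : ℝ) ^ (k + 1) * (d : ℝ)⁻¹ := by
    intro d hd
    obtain ⟨hdvd, hn0⟩ := Nat.mem_divisors.mp hd
    have hd0 : (0 : ℝ) < d := by exact_mod_cast Nat.pos_of_mem_divisors hd
    have hd1 : (1 : ℝ) ≤ d := by exact_mod_cast Nat.pos_of_mem_divisors hd
    have hcast : ((n / d : ℕ) : ℝ) = (n : ℝ) / d :=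
      Nat.cast_div hdvd (by exact_mod_cast hd0.ne')
    have hdk : (d : ℝ) ≤ (d : ℝ) ^ (k + 1) := le_self_pow₀ hd1 (Nat.succ_ne_zero k)
    calc ((n / d : ℕ) : ℝ) ^ (k + 1) = (n : ℝ) ^ (k + 1) / (d : ℝ) ^ (k + 1) := by
          rw [hcast, div_pow]
      _ ≤ (n : ℝ) ^ (k + 1) / d := by gcongr
      _ = (n : ℝ) ^ (k + 1) * (d : ℝ)⁻¹ := by rw [div_eq_mul_inv]
  calc ∑ d ∈ n.divisors, ((n / d : ℕ) : ℝ) ^ (k + 1)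
      ≤ ∑ d ∈ n.divisors, (n : ℝ) ^ (k + 1) * (d : ℝ)⁻¹ := Finset.sum_le_sum hstep
    _ = (n : ℝ) ^ (k + 1) * ∑ d ∈ n.divisors, (d : ℝ)⁻¹ := by rw [Finset.mul_sum]
    _ ≤ (n : ℝ) ^ (k + 1) * (1 + Real.log n) :=
        mul_le_mul_of_nonneg_left (sum_divisors_le_harmonic n) (by positivity)

/-! ### Additive equivalences for ℤ^d -/

def intFunAddEquiv : (Fin 1 → ℤ) ≃+ ℤ :=
  { Equiv.funUnique (Fin 1) ℤ with map_add' := fun _ _ => rfl }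

def piSuccAddEquiv (e : ℕ) : (Fin (e + 1) → ℤ) ≃+ ℤ × (Fin e → ℤ) :=
  { (Fin.consEquiv fun _ : Fin (e + 1) => ℤ).symm with map_add' := fun _ _ => rfl }

/-! ### The main induction -/

lemma main (e : ℕ) : ∀ n : ℕ, n ≠ 0 →
    Finite {H : AddSubgroup (Fin (e + 1) → ℤ) // H.index = n} ∧
    (Nat.card {H : AddSubgroup (Fin (e + 1) → ℤ) // H.index = n} : ℝ) ≤
      (n : ℝ) ^ e * (1 + Real.log n) ^ e := by
  induction e with
  | zero =>
    intro n hn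
    haveI := subsingleton_int hn
    haveI hss : Subsingleton {H : AddSubgroup (Fin 1 → ℤ) // H.index = n} :=
      (subtypeEquiv intFunAddEquiv n).symm.subsingleton
    refine ⟨Finite.of_subsingleton, ?_⟩
    simp only [pow_zero, mul_one]
    rcases isEmpty_or_nonempty {H : AddSubgroup (Fin 1 → ℤ) // H.index = n} with hE | hNE
    · simp [Nat.card_of_isEmpty]
    · exact_mod_cast le_of_eq (Nat.card_unique)
  | succ e ih =>
    intro n hn
    have hFin : ∀ m : ℕ, m ≠ 0 → Finite {K : AddSubgroup (Fin (e + 1) → ℤ) // K.index = m} :=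
      fun m hm => (ih m hm).1
    obtain ⟨fin1, hcard1⟩ := step (A := Fin (e + 1) → ℤ) n hn hFin
    haveI := fin1
    have equiv1 := subtypeEquiv (piSuccAddEquiv (e + 1)) n
    refine ⟨Finite.of_equiv _ equiv1, ?_⟩
    rw [← Nat.card_congr equiv1]
    have h0 : (Nat.card {H : AddSubgroup (ℤ × (Fin (e + 1) → ℤ)) // H.index = n} : ℝ) ≤
        ∑ m ∈ n.divisors,
          (m : ℝ) * (Nat.card {K : AddSubgroup (Fin (e + 1) → ℤ) // K.index = m} : ℝ) := by
      calc (Nat.card {H : AddSubgroup (ℤ × (Fin (e + 1) → ℤ)) // H.index = n} : ℝ)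
          ≤ ((∑ m ∈ n.divisors,
              m * Nat.card {K : AddSubgroup (Fin (e + 1) → ℤ) // K.index = m} : ℕ) : ℝ) := by
            exact_mod_cast hcard1
        _ = _ := by push_cast; rfl
    have h2 : ∀ m ∈ n.divisors,
        (m : ℝ) * (Nat.card {K : AddSubgroup (Fin (e + 1) → ℤ) // K.index = m} : ℝ) ≤
          (m : ℝ) ^ (e + 1) * (1 + Real.log n) ^ e := by
      intro m hm
      have hm0 : m ≠ 0 := (Nat.pos_of_mem_divisors hm).ne'
      have hm1 : (1 : ℝ) ≤ m := by exact_mod_cast Nat.pos_of_mem_divisors hm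
      have hmn : (m : ℝ) ≤ n := by exact_mod_cast Nat.divisor_le hm
      have hlogm : (0 : ℝ) ≤ Real.log m := Real.log_nonneg hm1
      have hlog : (1 + Real.log m) ^ e ≤ (1 + Real.log n) ^ e := by
        apply pow_le_pow_left₀ (by linarith)
        have : Real.log m ≤ Real.log n := Real.log_le_log (by linarith) hmn
        linarith
      calc (m : ℝ) * (Nat.card {K : AddSubgroup (Fin (e + 1) → ℤ) // K.index = m} : ℝ)
          ≤ (m : ℝ) * ((m : ℝ) ^ e * (1 + Real.log m) ^ e) :=
            mul_le_mul_of_nonneg_left (ih m hm0).2 (Nat.cast_nonneg m)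
        _ = (m : ℝ) ^ (e + 1) * (1 + Real.log m) ^ e := by ring
        _ ≤ (m : ℝ) ^ (e + 1) * (1 + Real.log n) ^ e :=
            mul_le_mul_of_nonneg_left hlog (by positivity)
    calc (Nat.card {H : AddSubgroup (ℤ × (Fin (e + 1) → ℤ)) // H.index = n} : ℝ)
        ≤ ∑ m ∈ n.divisors,
          (m : ℝ) * (Nat.card {K : AddSubgroup (Fin (e + 1) → ℤ) // K.index = m} : ℝ) := h0
      _ ≤ ∑ m ∈ n.divisors, (m : ℝ) ^ (e + 1) * (1 + Real.log n) ^ e := Finset.sum_le_sum h2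
      _ = (1 + Real.log n) ^ e * ∑ m ∈ n.divisors, (m : ℝ) ^ (e + 1) := by
          rw [Finset.mul_sum]
          exact Finset.sum_congr rfl (fun m _ => by ring)
      _ ≤ (1 + Real.log n) ^ e * ((n : ℝ) ^ (e + 1) * (1 + Real.log n)) := by
          apply mul_le_mul_of_nonneg_left (sum_divisors_pow_le n e)
          have hn1 : (1 : ℝ) ≤ n := by exact_mod_cast Nat.pos_of_ne_zero hn
          have := Real.log_nonneg hn1
          positivity
      _ = (n : ℝ) ^ (e + 1) * (1 + Real.log n) ^ (e + 1) := by ring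

end SubgroupCountAux

/-- For `d ≥ 2` and `n ≥ 2`, `a_n(ℤ^d) ≤ 3^d n^{d-1} (log n)^{d-1}`. -/
theorem subgroupCount_upper_bound (d n : ℕ) (hd : 2 ≤ d) (hn : 2 ≤ n) :
    (subgroupCount d n : ℝ) ≤ 3 ^ d * n ^ (d - 1) * Real.log n ^ (d - 1) := by
  obtain ⟨e, rfl⟩ : ∃ e, d = e + 1 := ⟨d - 1, by omega⟩
  have hn0 : n ≠ 0 := by omega
  have hmain := (SubgroupCountAux.main e n hn0).2
  have hn1 : (1 : ℝ) ≤ n := by exact_mod_cast Nat.one_le_of_lt hn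
  have hlogpos : 0 ≤ Real.log n := Real.log_nonneg hn1
  have hlog2 : (1 : ℝ) + Real.log n ≤ 3 * Real.log n := by
    have h2 : Real.log 2 ≤ Real.log n := Real.log_le_log (by norm_num) (by exact_mod_cast hn)
    nlinarith [Real.log_two_gt_d9]
  simp only [Nat.add_sub_cancel]
  calc (subgroupCount (e + 1) n : ℝ)
      ≤ (n : ℝ) ^ e * (1 + Real.log n) ^ e := hmain
    _ ≤ (n : ℝ) ^ e * (3 * Real.log n) ^ e :=
        mul_le_mul_of_nonneg_left (pow_le_pow_left₀ (by linarith) hlog2 e) (by positivity)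
    _ = 3 ^ e * ((n : ℝ) ^ e * Real.log n ^ e) := by rw [mul_pow]; ring
    _ ≤ 3 ^ (e + 1) * ((n : ℝ) ^ e * Real.log n ^ e) := by
        apply mul_le_mul_of_nonneg_right _ (by positivity)
        apply pow_le_pow_right₀ (by norm_num) (Nat.le_succ e)
    _ = 3 ^ (e + 1) * (n : ℝ) ^ e * Real.log n ^ e := by ring
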